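/- Let t > 1 and pi the distribution on s-colored Motzkin paths of length 2n proportional to t^(2A(x)). Let B be the set of paths having an up step at height zero in position n or a down step reaching height zero in position n+1. Then for all sufficiently large n, pi(B) < t^(-n^2/3). -/

import Mathlib

/-- A step of an `s`-colored Motzkin path: an up step with a color,
a flat step, or a down step with a color. -/
inductive MStep (s : ℕ) : Type
  | up (c : Fin s) : MStep s
  | flat : MStep s
  | down (c : Fin s) : MStep s
  deriving DecidableEq

/-- Height change of a step. -/
def MStep.h {s : ℕ} : MStep s → ℤ
  | .up _ => 1
  | .flat => 0
  | .down _ => -1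

/-- Height of the path `x` after `j` steps. -/
def height {s : ℕ} (x : List (MStep s)) (j : ℕ) : ℤ :=
  ((x.take j).map MStep.h).sum

/-- Stack-based checker: `isMotzkinAux stack x` holds iff, starting with the
stack of colors of currently unmatched up steps, the list `x` stays weakly
above the axis, ends with an empty stack (height 0), and every down step
carries the color of its matching up step. -/
def isMotzkinAux {s : ℕ} : List (Fin s) → List (MStep s) → Prop
  | stack, [] => stack = []
  | stack, (MStep.up c) :: rest => isMotzkinAux (c :: stack) rest
  | stack, MStep.flat :: rest => isMotzkinAux stack rest
  | [], (MStep.down _) :: _ => False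
  | (c :: stack), (MStep.down c') :: rest => c = c' ∧ isMotzkinAux stack rest

/-- `x` is an `s`-colored Motzkin path (of its own length): it goes from
height 0 to height 0, never below the axis, with matched colors. -/
def isMotzkin {s : ℕ} (x : List (MStep s)) : Prop := isMotzkinAux [] x

/-- Twice the area between the path and the x-axis. -/
def area2 {s : ℕ} (x : List (MStep s)) : ℤ :=
  ∑ j ∈ Finset.range x.length, (height x j + height x (j + 1))

/-- The area between the path and the x-axis: a flat step at height `h`
contributes `h`, an up/down step between heights `h` and `h+1` contributes
`h + 1/2`. -/
def area {s : ℕ} (x : List (MStep s)) : ℚ := (area2 x : ℚ) / 2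

/-- The set of s-colored Motzkin paths of length 2n. -/
def Omega (s n : ℕ) : Set (List (MStep s)) := {x | isMotzkin x ∧ x.length = 2 * n}

/-- The π-probability (for the distribution proportional to t^(2·area x))
of a set S of s-colored Motzkin paths of length 2n. -/
noncomputable def piOf (s n : ℕ) (t : ℝ) (S : Set (List (MStep s))) : ℝ :=
  (∑ᶠ x ∈ S ∩ Omega s n, t ^ area2 x) / (∑ᶠ x ∈ Omega s n, t ^ area2 x)

/-- The set of non-prime paths: those touching height 0 at some intermediate
position. -/
def nonPrime (s n : ℕ) : Set (List (MStep s)) :=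
  {x | ∃ j, 1 < j ∧ j < 2 * n ∧ height x j = 0}

/-- The bottleneck: paths with an up step at height zero in position n, or a
down step reaching height zero in position n+1. -/
def bottleneck (s n : ℕ) : Set (List (MStep s)) :=
  {x | (∃ c, x[n - 1]? = some (MStep.up c) ∧ height x (n - 1) = 0) ∨
       (∃ c, x[n]? = some (MStep.down c) ∧ height x (n + 1) = 0)}

section lemmas
variable {s : ℕ}

lemma height_zero (x : List (MStep s)) : height x 0 = 0 := rfl

lemma height_succ (x : List (MStep s)) (j : ℕ) :
    height x (j+1) = height x j + ((x[j]?.map MStep.h).getD 0) := by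
  unfold height
  rw [List.take_succ, List.map_append, List.sum_append]
  cases h : x[j]? <;> simp [h]

lemma height_step (x : List (MStep s)) (j : ℕ) :
    height x j - 1 ≤ height x (j+1) ∧ height x (j+1) ≤ height x j + 1 := by
  rw [height_succ]
  cases h : x[j]? with
  | none => simp
  | some a => cases a <;> simp [MStep.h] <;> omega

lemma height_lipschitz (x : List (MStep s)) (j d : ℕ) :
    height x j - d ≤ height x (j+d) ∧ height x (j+d) ≤ height x j + d := by
  induction d with
  | zero => simp
  | succ d ih =>
    have h := height_step x (j+d)
    rw [← add_assoc]
    push_cast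
    omega

lemma height_le_index (x : List (MStep s)) (j : ℕ) : height x j ≤ j := by
  have := height_lipschitz x 0 j
  simpa [height_zero] using this.2

lemma height_le_of_zero (x : List (MStep s)) {j m : ℕ} (hjm : j ≤ m)
    (h0 : height x m = 0) : height x j ≤ (m : ℤ) - j := by
  have := (height_lipschitz x j (m - j)).1
  rw [show j + (m - j) = m by omega, h0] at this
  omega

lemma height_ge_of_zero (x : List (MStep s)) {j m : ℕ} (hjm : m ≤ j)
    (h0 : height x m = 0) : height x j ≤ (j : ℤ) - m := by
  have := (height_lipschitz x m (j - m)).2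
  rw [show m + (j - m) = j by omega, h0] at this
  omega

lemma isMotzkinAux_sum (x : List (MStep s)) : ∀ st, isMotzkinAux st x →
    (x.map MStep.h).sum = -(st.length : ℤ) := by
  induction x with
  | nil => intro st h; simp only [isMotzkinAux] at h; rw [h]; simp
  | cons a rest ih =>
    intro st h
    cases a with
    | up c =>
      simp only [isMotzkinAux] at h
      have := ih (c :: st) h
      simp only [List.map_cons, List.sum_cons, this, MStep.h, List.length_cons]
      push_cast; ring
    | flat =>
      simp only [isMotzkinAux] at h
      have := ih st h
      simp [MStep.h, this]
    | down c' =>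
      cases st with
      | nil => exact absurd h (by simp [isMotzkinAux])
      | cons c st' =>
        simp only [isMotzkinAux] at h
        have := ih st' h.2
        simp only [List.map_cons, List.sum_cons, this, MStep.h, List.length_cons]
        push_cast; ring

lemma height_total (x : List (MStep s)) (hx : isMotzkin x) {j : ℕ}
    (hj : x.length ≤ j) : height x j = 0 := by
  unfold height
  rw [List.take_of_length_le hj]
  simpa using isMotzkinAux_sum x [] hx

end lemmas

def fmin (m : ℕ) : ℕ := ∑ j ∈ Finset.range (m+1), min j (m - j)

lemma fmin_step (m : ℕ) : fmin (m+2) = fmin m + (m+1) := by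
  unfold fmin
  rw [Finset.sum_range_succ' (fun j => min j (m+2-j)) (m+2)]
  rw [Finset.sum_range_succ]
  have h1 : ∀ i ∈ Finset.range (m+1), min (i+1) (m+2-(i+1)) = min i (m-i) + 1 := by
    intro i hi
    rw [Finset.mem_range] at hi
    omega
  rw [Finset.sum_congr rfl h1, Finset.sum_add_distrib]
  simp

lemma fmin_le (m : ℕ) : 4 * fmin m ≤ m^2 + 2*m := by
  induction m using Nat.strong_induction_on with
  | _ m ih =>
    match m with
    | 0 => decide
    | 1 => decide
    | (k+2) =>
      rw [fmin_step]
      have h := ih k (by omega)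
      nlinarith

lemma fmin_even (n : ℕ) : fmin (2*n) = n^2 := by
  induction n with
  | zero => decide
  | succ n ih =>
    have : 2*(n+1) = 2*n + 2 := by ring
    rw [this, fmin_step, ih]
    ring
section areasec
variable {s : ℕ}

lemma area2_eq (x : List (MStep s)) (n : ℕ) (hx : isMotzkin x) (hlen : x.length = 2*n) :
    area2 x = 2 * ∑ j ∈ Finset.range (2*n+1), height x j := by
  unfold area2
  rw [hlen, Finset.sum_add_distrib]
  have h1 : ∑ j ∈ Finset.range (2*n), height x (j+1)
      = ∑ j ∈ Finset.range (2*n+1), height x j - height x 0 := by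
    rw [Finset.sum_range_succ' (fun j => height x j) (2*n)]; ring
  have h2 : ∑ j ∈ Finset.range (2*n), height x j
      = ∑ j ∈ Finset.range (2*n+1), height x j - height x (2*n) := by
    rw [Finset.sum_range_succ (fun j => height x j) (2*n)]; ring
  rw [h1, h2, height_zero, height_total x hx (le_of_eq hlen)]
  ring

lemma sum_heights_le (x : List (MStep s)) (n m : ℕ) (hx : isMotzkin x)
    (hlen : x.length = 2*n) (hm : m ≤ 2*n) (hm0 : height x m = 0) :
    ∑ j ∈ Finset.range (2*n+1), height x j ≤ (fmin m : ℤ) + fmin (2*n - m) := by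
  have hsplit : ∑ j ∈ Finset.range (2*n+1), height x j
      = ∑ j ∈ Finset.Ico 0 (m+1), height x j + ∑ j ∈ Finset.Ico (m+1) (2*n+1), height x j := by
    rw [Finset.sum_Ico_consecutive _ (by omega) (by omega), ← Finset.range_eq_Ico]
  rw [hsplit]
  have hz2n : height x (2*n) = 0 := height_total x hx (le_of_eq hlen)
  have b1 : ∑ j ∈ Finset.Ico 0 (m+1), height x j ≤ (fmin m : ℤ) := by
    rw [← Finset.range_eq_Ico]
    unfold fmin
    push_cast
    apply Finset.sum_le_sum
    intro j hj
    rw [Finset.mem_range] at hj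
    have hjm : j ≤ m := by omega
    have u1 := height_le_index x j
    have u2 := height_le_of_zero x hjm hm0
    have : ((m - j : ℕ) : ℤ) = (m : ℤ) - j := by omega
    omega
  have b2 : ∑ j ∈ Finset.Ico (m+1) (2*n+1), height x j ≤ (fmin (2*n - m) : ℤ) := by
    rw [Finset.sum_Ico_eq_sum_range]
    have hfm : (fmin (2*n - m) : ℤ)
        = ∑ i ∈ Finset.range (2*n - m), ((min (i+1) (2*n - m - (i+1)) : ℕ) : ℤ) := by
      unfold fmin
      rw [Finset.sum_range_succ' (fun j => min j (2*n - m - j)) (2*n - m)]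
      push_cast
      simp
    rw [show 2*n + 1 - (m+1) = 2*n - m by omega, hfm]
    apply Finset.sum_le_sum
    intro i hi
    rw [Finset.mem_range] at hi
    have u1 := height_ge_of_zero x (show m ≤ m+1+i by omega) hm0
    have u2 := height_le_of_zero x (show m+1+i ≤ 2*n by omega) hz2n
    omega
  omega

lemma area2_bottleneck_le (x : List (MStep s)) (n m : ℕ) (hn : 1 ≤ n)
    (hx : isMotzkin x) (hlen : x.length = 2*n)
    (hm : m = n - 1 ∨ m = n + 1) (hm0 : height x m = 0) :
    area2 x ≤ (n : ℤ)^2 + 2*n + 1 := by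
  have hmle : m ≤ 2*n := by omega
  have h1 := sum_heights_le x n m hx hlen hmle hm0
  rw [area2_eq x n hx hlen]
  obtain ⟨k, rfl⟩ : ∃ k, n = k + 1 := ⟨n - 1, by omega⟩
  have f1 := fmin_le k
  have f2 := fmin_le (k+2)
  have c1 : (4 * fmin k : ℤ) ≤ (k:ℤ)^2 + 2*k := by exact_mod_cast f1
  have c2 : (4 * fmin (k+2) : ℤ) ≤ ((k:ℤ)+2)^2 + 2*((k:ℤ)+2) := by exact_mod_cast f2
  rcases hm with h | h
  · have hmk : m = k := by omega
    rw [hmk] at h1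
    rw [show 2*(k+1) - k = k + 2 by omega] at h1
    push_cast
    nlinarith
  · have hmk : m = k + 2 := by omega
    rw [hmk] at h1
    rw [show 2*(k+1) - (k+2) = k by omega] at h1
    push_cast
    nlinarith
end areasec
section peak
variable {s : ℕ}

def MStepEquiv (s : ℕ) : MStep s ≃ (Fin s ⊕ (Unit ⊕ Fin s)) where
  toFun x := match x with
    | .up c => .inl c
    | .flat => .inr (.inl ())
    | .down c => .inr (.inr c)
  invFun y := match y with
    | .inl c => .up c
    | .inr (.inl _) => .flat
    | .inr (.inr c) => .down c
  left_inv x := by cases x <;> rfl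
  right_inv y := by rcases y with _ | (_ | _) <;> rfl

noncomputable instance : Fintype (MStep s) := Fintype.ofEquiv _ (MStepEquiv s).symm

lemma MStep_card (s : ℕ) : Fintype.card (MStep s) = 2*s + 1 := by
  rw [Fintype.card_congr (MStepEquiv s)]
  simp
  ring

def xpeak (s : ℕ) (c : Fin s) (n : ℕ) : List (MStep s) :=
  List.replicate n (MStep.up c) ++ List.replicate n (MStep.down c)

lemma xpeak_length (c : Fin s) (n : ℕ) : (xpeak s c n).length = 2*n := by
  simp [xpeak]
  ring

lemma down_ok (c : Fin s) : ∀ n, isMotzkinAux (List.replicate n c) (List.replicate n (MStep.down c))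
  | 0 => rfl
  | (n+1) => by
      rw [List.replicate_succ, List.replicate_succ]
      exact ⟨rfl, down_ok c n⟩

lemma up_then (c : Fin s) : ∀ (n : ℕ) (st : List (Fin s)) (rest : List (MStep s)),
    isMotzkinAux (List.replicate n c ++ st) rest →
    isMotzkinAux st (List.replicate n (MStep.up c) ++ rest)
  | 0, st, rest, h => by simpa using h
  | (n+1), st, rest, h => by
      rw [List.replicate_succ, List.cons_append]
      simp only [isMotzkinAux]
      apply up_then c n (c :: st) rest
      rw [show List.replicate n c ++ (c :: st) = List.replicate (n+1) c ++ st by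
        rw [List.replicate_succ' ]; simp]
      exact h

lemma xpeak_isMotzkin (c : Fin s) (n : ℕ) : isMotzkin (xpeak s c n) := by
  unfold isMotzkin xpeak
  apply up_then
  simpa using down_ok c n

lemma xpeak_height_le (c : Fin s) (n : ℕ) {j : ℕ} (hj : j ≤ n) :
    height (xpeak s c n) j = j := by
  unfold height xpeak
  rw [List.take_append]
  simp only [List.length_replicate]
  rw [show j - n = 0 by omega]
  rw [List.take_replicate, List.take_zero]
  simp [show min j n = j by omega, MStep.h]

lemma xpeak_height_ge (c : Fin s) (n : ℕ) {j : ℕ} (hj1 : n ≤ j) (hj2 : j ≤ 2*n) :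
    height (xpeak s c n) j = 2*(n:ℤ) - j := by
  unfold height xpeak
  rw [List.take_append]
  simp only [List.length_replicate]
  rw [List.take_replicate, List.take_replicate]
  rw [show min j n = n by omega, show min (j - n) n = j - n by omega]
  simp [MStep.h]
  omega

lemma xpeak_area2 (c : Fin s) (n : ℕ) : area2 (xpeak s c n) = 2 * (n:ℤ)^2 := by
  rw [area2_eq (xpeak s c n) n (xpeak_isMotzkin c n) (xpeak_length c n)]
  have : ∑ j ∈ Finset.range (2*n+1), height (xpeak s c n) j
      = ∑ j ∈ Finset.range (2*n+1), ((min j (2*n - j) : ℕ) : ℤ) := by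
    apply Finset.sum_congr rfl
    intro j hj
    rw [Finset.mem_range] at hj
    by_cases hjn : j ≤ n
    · rw [xpeak_height_le c n hjn]
      omega
    · rw [xpeak_height_ge c n (by omega) (by omega)]
      omega
  rw [this]
  have : ∑ j ∈ Finset.range (2*n+1), ((min j (2*n - j) : ℕ) : ℤ) = ((fmin (2*n) : ℕ) : ℤ) := by
    unfold fmin
    push_cast
    rfl
  rw [this, fmin_even]
  push_cast
  ring

end peak
lemma card_omega_bound {s n : ℕ} {S : Set (List (MStep s))}
    (hfin : (S ∩ Omega s n).Finite) : hfin.toFinset.card ≤ (2*s+1)^(2*n) := by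
  classical
  set g : List (MStep s) → List.Vector (MStep s) (2*n) := fun x =>
    if h : x.length = 2*n then ⟨x, h⟩ else ⟨List.replicate (2*n) MStep.flat, by simp⟩ with hg
  have key : hfin.toFinset.card ≤ (Finset.univ : Finset (List.Vector (MStep s) (2*n))).card :=
    Finset.card_le_card_of_injOn g (fun a _ => Finset.mem_univ _) ?_
  · calc hfin.toFinset.card ≤ (Finset.univ : Finset (List.Vector (MStep s) (2*n))).card := key
      _ = Fintype.card (List.Vector (MStep s) (2*n)) := Finset.card_univ
      _ = (2*s+1)^(2*n) := by rw [card_vector, MStep_card]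
  · intro a ha b hb hab
    rw [Finset.mem_coe, Set.Finite.mem_toFinset] at ha hb
    have la : a.length = 2*n := ha.2.2
    have lb : b.length = 2*n := hb.2.2
    simp only [hg, dif_pos la, dif_pos lb] at hab
    simpa [la, lb] using congrArg Subtype.val hab


/-- For t > 1 and all sufficiently large n, π(B) < t^(-n²/3). -/
theorem stmt10 (s : ℕ) (hs : 1 ≤ s) (t : ℝ) (ht : 1 < t) :
    ∃ N : ℕ, ∀ n ≥ N, piOf s n t (bottleneck s n) < t ^ (-(n : ℝ) ^ 2 / 3) := by
  have ht0 : (0:ℝ) < t := lt_trans one_pos ht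
  set c := Real.logb t (2*s+1) with hc
  refine ⟨max 4 (⌈3*(c+2)⌉₊ + 1), fun n hn => ?_⟩
  have hn4 : 4 ≤ n := le_trans (le_max_left _ _) hn
  have hn1 : 1 ≤ n := by omega
  have hnc : 3*(c+2) ≤ (n:ℝ) := by
    calc 3*(c+2) ≤ (⌈3*(c+2)⌉₊ : ℝ) := Nat.le_ceil _
      _ ≤ (n:ℝ) := by
        have : ⌈3*(c+2)⌉₊ ≤ n := by
          have := le_trans (le_max_right 4 (⌈3*(c+2)⌉₊ + 1)) hn
          omega
        exact_mod_cast this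
  have hnr : (4:ℝ) ≤ (n:ℝ) := by exact_mod_cast hn4
  -- finiteness
  have hΩfin : (Omega s n).Finite :=
    (List.finite_length_eq (MStep s) (2*n)).subset (fun x hx => hx.2)
  have hBfin : (bottleneck s n ∩ Omega s n).Finite := hΩfin.subset Set.inter_subset_right
  -- the peak path
  set x0 : List (MStep s) := xpeak s ⟨0, hs⟩ n with hx0
  -- denominator bound
  have hden : t ^ (2*(n:ℤ)^2) ≤ ∑ᶠ x ∈ Omega s n, t ^ area2 x := by
    rw [← Set.Finite.coe_toFinset hΩfin, finsum_mem_coe_finset]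
    have hmem : x0 ∈ hΩfin.toFinset := by
      rw [Set.Finite.mem_toFinset]
      exact ⟨xpeak_isMotzkin _ n, xpeak_length _ n⟩
    calc t ^ (2*(n:ℤ)^2) = t ^ area2 x0 := by rw [hx0, xpeak_area2]
      _ ≤ _ := Finset.single_le_sum (fun i _ => le_of_lt (zpow_pos ht0 _)) hmem
  have hdenpos : (0:ℝ) < ∑ᶠ x ∈ Omega s n, t ^ area2 x :=
    lt_of_lt_of_le (zpow_pos ht0 _) hden
  -- numerator bound
  set K : ℤ := (n:ℤ)^2 + 2*n + 1 with hK
  set A : ℝ := ((2*s+1 : ℕ) : ℝ) with hA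
  have hApos : (0:ℝ) < A := by positivity
  have hnum : (∑ᶠ x ∈ bottleneck s n ∩ Omega s n, t ^ area2 x) ≤ A^(2*n) * t ^ K := by
    rw [← Set.Finite.coe_toFinset hBfin, finsum_mem_coe_finset]
    have hterm : ∀ x ∈ hBfin.toFinset, t ^ area2 x ≤ t ^ K := by
      intro x hx
      rw [Set.Finite.mem_toFinset] at hx
      obtain ⟨hxB, hxM, hxlen⟩ := hx
      apply zpow_le_zpow_right₀ (le_of_lt ht)
      rcases hxB with ⟨cc, _, h0⟩ | ⟨cc, _, h0⟩
      · exact area2_bottleneck_le x n (n-1) hn1 hxM hxlen (Or.inl rfl) h0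
      · exact area2_bottleneck_le x n (n+1) hn1 hxM hxlen (Or.inr rfl) h0
    calc ∑ x ∈ hBfin.toFinset, t ^ area2 x ≤ hBfin.toFinset.card • t ^ K :=
          Finset.sum_le_card_nsmul _ _ _ hterm
      _ = (hBfin.toFinset.card : ℝ) * t ^ K := nsmul_eq_mul _ _
      _ ≤ A^(2*n) * t ^ K := by
          apply mul_le_mul_of_nonneg_right _ (le_of_lt (zpow_pos ht0 _))
          rw [hA, ← Nat.cast_pow, Nat.cast_le]
          exact card_omega_bound hBfin
  -- put it together
  have hnumnonneg : (0:ℝ) ≤ ∑ᶠ x ∈ bottleneck s n ∩ Omega s n, t ^ area2 x := by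
    rw [← Set.Finite.coe_toFinset hBfin, finsum_mem_coe_finset]
    exact Finset.sum_nonneg (fun i _ => le_of_lt (zpow_pos ht0 _))
  have step1 : piOf s n t (bottleneck s n) ≤ A^(2*n) * t ^ (K - 2*(n:ℤ)^2) := by
    unfold piOf
    calc (∑ᶠ x ∈ bottleneck s n ∩ Omega s n, t ^ area2 x) / (∑ᶠ x ∈ Omega s n, t ^ area2 x)
        ≤ (A^(2*n) * t ^ K) / (t ^ (2*(n:ℤ)^2)) := by
          apply div_le_div₀ (by positivity) hnum (zpow_pos ht0 _) hden
      _ = A^(2*n) * t ^ (K - 2*(n:ℤ)^2) := by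
          rw [zpow_sub₀ (ne_of_gt ht0), mul_div_assoc]
  refine lt_of_le_of_lt step1 ?_
  -- now the strict inequality via rpow
  have hA1 : A^(2*n) = t ^ ((2*n : ℝ) * c) := by
    rw [hc, show ((2*n:ℝ)) * Real.logb t (2*s+1) = Real.logb t (((2*s+1:ℝ))^(2*n)) by
      rw [Real.logb_pow]; push_cast; ring]
    rw [Real.rpow_logb ht0 (ne_of_gt ht) (by positivity)]
    rw [hA]; push_cast; ring
  have hA2 : t ^ (K - 2*(n:ℤ)^2) = t ^ (((K - 2*(n:ℤ)^2 : ℤ) : ℝ)) := by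
    rw [Real.rpow_intCast]
  rw [hA1, hA2, ← Real.rpow_add ht0]
  rw [Real.rpow_lt_rpow_left_iff ht]
  have hcast : ((K - 2*(n:ℤ)^2 : ℤ) : ℝ) = -(n:ℝ)^2 + 2*n + 1 := by
    rw [hK]; push_cast; ring
  rw [hcast]
  push_cast
  nlinarith [mul_nonneg (sub_nonneg.2 hnc) (by positivity : (0:ℝ) ≤ (n:ℝ))]
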